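/- Let H be an inner product space, x₁,…,xₙ ∈ H, p₁,…,pₙ ≥ 0 with Σᵢ pᵢ = 1, and suppose x, X ∈ H satisfy ‖xᵢ - (x+X)/2‖ ≤ (1/2)‖X - x‖ for all i. Then 0 ≤ Σᵢ pᵢ‖xᵢ‖² - ‖Σᵢ pᵢxᵢ‖² ≤ (1/2)‖X - x‖ · Σᵢ pᵢ‖xᵢ - Σⱼ pⱼxⱼ‖. -/

import Mathlib

open RCLike Finset

local notation "⟪" x ", " y "⟫" => @inner _ _ _ x y

theorem stmt9 {𝕜 : Type*} [RCLike 𝕜] {H : Type*} [NormedAddCommGroup H]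
    [InnerProductSpace 𝕜 H] (n : ℕ) (x : Fin n → H) (p : Fin n → ℝ)
    (hp : ∀ i, 0 ≤ p i) (hp1 : ∑ i, p i = 1) (a X : H)
    (hx : ∀ i, ‖x i - (2 : 𝕜)⁻¹ • (a + X)‖ ≤ ‖X - a‖ / 2) :
    0 ≤ ∑ i, p i * ‖x i‖ ^ 2 - ‖∑ i, (p i : 𝕜) • x i‖ ^ 2 ∧
      ∑ i, p i * ‖x i‖ ^ 2 - ‖∑ i, (p i : 𝕜) • x i‖ ^ 2 ≤
        (1 / 2) * ‖X - a‖ * ∑ i, p i * ‖x i - ∑ j, (p j : 𝕜) • x j‖ := by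
  set m : H := ∑ i, (p i : 𝕜) • x i with hm
  set c : H := (2 : 𝕜)⁻¹ • (a + X) with hc
  have hp1' : ∑ i, (p i : 𝕜) = 1 := by
    rw [← RCLike.ofReal_sum, hp1, RCLike.ofReal_one]
  have hzero : ∑ i, (p i : 𝕜) • (x i - m) = 0 := by
    simp only [smul_sub, Finset.sum_sub_distrib, ← Finset.sum_smul, hp1', one_smul, sub_self]
    exact sub_eq_zero.mpr hm.symm
  -- key: for any v, ∑ p i * re ⟪x i - m, v⟫ = 0
  have key : ∀ v : H, ∑ i, p i * re (⟪x i - m, v⟫ : 𝕜) = 0 := by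
    intro v
    have : (⟪∑ i, (p i : 𝕜) • (x i - m), v⟫ : 𝕜) = 0 := by rw [hzero, inner_zero_left]
    rw [sum_inner] at this
    calc ∑ i, p i * re (⟪x i - m, v⟫ : 𝕜)
        = re (∑ i, (⟪(p i : 𝕜) • (x i - m), v⟫ : 𝕜)) := by
          rw [map_sum]
          congr 1; ext i
          rw [inner_smul_left, RCLike.conj_ofReal, re_ofReal_mul]
      _ = 0 := by rw [this, map_zero]
  -- ∑ p ‖x i - m‖² = ∑ p re ⟪x i - m, x i⟫
  have h1 : ∑ i, p i * ‖x i - m‖ ^ 2 = ∑ i, p i * re (⟪x i - m, x i⟫ : 𝕜) := by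
    have := key m
    calc ∑ i, p i * ‖x i - m‖ ^ 2
        = ∑ i, (p i * re (⟪x i - m, x i⟫ : 𝕜) - p i * re (⟪x i - m, m⟫ : 𝕜)) := by
          congr 1; ext i
          rw [← mul_sub, ← map_sub, ← inner_sub_right, ← @inner_self_eq_norm_sq 𝕜]
      _ = _ := by rw [Finset.sum_sub_distrib, key m, sub_zero]
  -- variance identity
  have h2 : ∑ i, p i * re (⟪x i - m, x i⟫ : 𝕜) = ∑ i, p i * ‖x i‖ ^ 2 - ‖m‖ ^ 2 := by
    have hmm : ∑ i, p i * re (⟪m, x i⟫ : 𝕜) = ‖m‖ ^ 2 := by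
      rw [← @inner_self_eq_norm_sq 𝕜 _ _ _ _ m]
      nth_rewrite 2 [hm]
      rw [inner_sum, map_sum]
      congr 1; ext i
      rw [inner_smul_right, re_ofReal_mul]
    calc ∑ i, p i * re (⟪x i - m, x i⟫ : 𝕜)
        = ∑ i, (p i * ‖x i‖ ^ 2 - p i * re (⟪m, x i⟫ : 𝕜)) := by
          congr 1; ext i
          rw [inner_sub_left, map_sub, mul_sub, ← @inner_self_eq_norm_sq 𝕜]
      _ = _ := by rw [Finset.sum_sub_distrib, hmm]
  have hvar : ∑ i, p i * ‖x i‖ ^ 2 - ‖m‖ ^ 2 = ∑ i, p i * ‖x i - m‖ ^ 2 := by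
    rw [h1, h2]
  constructor
  · rw [hvar]
    exact Finset.sum_nonneg fun i _ => mul_nonneg (hp i) (sq_nonneg _)
  · rw [hvar]
    have h3 : ∑ i, p i * ‖x i - m‖ ^ 2 = ∑ i, p i * re (⟪x i - m, x i - c⟫ : 𝕜) := by
      rw [h1]
      calc ∑ i, p i * re (⟪x i - m, x i⟫ : 𝕜)
          = ∑ i, (p i * re (⟪x i - m, x i - c⟫ : 𝕜) + p i * re (⟪x i - m, c⟫ : 𝕜)) := by
            congr 1; ext i
            rw [← mul_add, ← map_add, ← inner_add_right, sub_add_cancel]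
        _ = _ := by rw [Finset.sum_add_distrib, key c, add_zero]
    rw [h3]
    calc ∑ i, p i * re (⟪x i - m, x i - c⟫ : 𝕜)
        ≤ ∑ i, p i * (‖x i - m‖ * (‖X - a‖ / 2)) := by
          apply Finset.sum_le_sum
          intro i _
          refine mul_le_mul_of_nonneg_left ?_ (hp i)
          calc re (⟪x i - m, x i - c⟫ : 𝕜) ≤ ‖x i - m‖ * ‖x i - c‖ := re_inner_le_norm _ _
            _ ≤ ‖x i - m‖ * (‖X - a‖ / 2) :=
              mul_le_mul_of_nonneg_left (hx i) (norm_nonneg _)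
      _ = 1 / 2 * ‖X - a‖ * ∑ i, p i * ‖x i - m‖ := by
          simp only [mul_assoc, Finset.mul_sum]
          exact Finset.sum_congr rfl fun i _ => by ring
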